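/- arXiv:0806.4684 — 3 statements merged into one kernel-verified Lean document; each statement's English description precedes it below -/
import Mathlib

section
/- For any fixed μ > 0, lim_{k→∞} (ln u_c(k)) / (-k) = 0, where u_c(k) = ∫₀¹ t^{k-1} e^{-μ/(1-t)} dt. In other words, u_c(k) decays subexponentially in k. -/
open MeasureTheory intervalIntegral Real

lemma uc_integrable (μ : ℝ) (hμ : 0 < μ) (n : ℕ) :
    IntervalIntegrable (fun t : ℝ => t ^ n * Real.exp (-μ / (1 - t))) volume 0 1 := by
  have hmeas : Measurable (fun t : ℝ => t ^ n * Real.exp (-μ / (1 - t))) := by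
    exact (measurable_id.pow_const n).mul
      ((measurable_const.div (measurable_const.sub measurable_id)).exp)
  apply (_root_.intervalIntegrable_const (c := (1:ℝ))).mono_fun'
    (hmeas.aestronglyMeasurable)
  filter_upwards [ae_restrict_mem measurableSet_uIoc] with t ht
  rw [Set.uIoc_of_le (by norm_num : (0:ℝ) ≤ 1)] at ht
  obtain ⟨ht0, ht1⟩ := ht
  have h1t : 0 ≤ 1 - t := by linarith
  have hexp : Real.exp (-μ / (1 - t)) ≤ 1 := by
    apply Real.exp_le_one_iff.mpr
    rw [neg_div]
    simp only [neg_nonpos]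
    positivity
  have hpow : t ^ n ≤ 1 := pow_le_one₀ ht0.le ht1
  have hexp0 : 0 < Real.exp (-μ / (1 - t)) := Real.exp_pos _
  rw [Real.norm_eq_abs, abs_of_nonneg (by positivity)]
  calc t ^ n * Real.exp (-μ / (1 - t)) ≤ 1 * 1 := by
        apply mul_le_mul hpow hexp hexp0.le zero_le_one
    _ = 1 := by norm_num

lemma uc_le_one (μ : ℝ) (hμ : 0 < μ) (n : ℕ) :
    (∫ t in (0:ℝ)..1, t ^ n * Real.exp (-μ / (1 - t))) ≤ 1 := by
  calc (∫ t in (0:ℝ)..1, t ^ n * Real.exp (-μ / (1 - t)))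
      ≤ ∫ _ in (0:ℝ)..1, (1:ℝ) := by
        apply intervalIntegral.integral_mono_on (by norm_num)
          (uc_integrable μ hμ n) (by apply _root_.intervalIntegrable_const)
        intro t ht
        obtain ⟨ht0, ht1⟩ := ht
        have hexp : Real.exp (-μ / (1 - t)) ≤ 1 := by
          apply Real.exp_le_one_iff.mpr
          rw [neg_div]
          simp only [neg_nonpos]
          have : 0 ≤ 1 - t := by linarith
          positivity
        have hpow : t ^ n ≤ 1 := pow_le_one₀ ht0 ht1
        calc t ^ n * Real.exp (-μ / (1 - t)) ≤ 1 * 1 :=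
              mul_le_mul hpow hexp (Real.exp_pos _).le zero_le_one
          _ = 1 := by norm_num
    _ = 1 := by simp

lemma uc_lower (μ : ℝ) (hμ : 0 < μ) (n : ℕ) (a b : ℝ) (ha : 0 < a) (hab : a < b)
    (hb : b < 1) :
    (b - a) * (a ^ n * Real.exp (-μ / (1 - b))) ≤
      ∫ t in (0:ℝ)..1, t ^ n * Real.exp (-μ / (1 - t)) := by
  have hInt := uc_integrable μ hμ n
  have hab' : a ≤ b := hab.le
  have h0a : (0:ℝ) ≤ a := ha.le
  have hb1 : b ≤ 1 := hb.le
  have hsub : ∀ c d : ℝ, 0 ≤ c → c ≤ d → d ≤ 1 →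
      IntervalIntegrable (fun t : ℝ => t ^ n * Real.exp (-μ / (1 - t))) MeasureTheory.volume c d := by
    intro c d hc hcd hd1
    apply hInt.mono_set
    rw [Set.uIcc_of_le hcd, Set.uIcc_of_le (by norm_num : (0:ℝ) ≤ 1)]
    exact Set.Icc_subset_Icc hc hd1
  have hIab := hsub a b h0a hab' hb1
  have hI0a := hsub 0 a le_rfl h0a (by linarith)
  have hIb1 := hsub b 1 (by linarith) hb1 le_rfl
  have hnn : ∀ t : ℝ, 0 ≤ t → 0 ≤ t ^ n * Real.exp (-μ / (1 - t)) := by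
    intro t ht
    positivity
  have hsplit1 : (∫ t in (0:ℝ)..a, t ^ n * Real.exp (-μ / (1 - t))) +
      (∫ t in a..b, t ^ n * Real.exp (-μ / (1 - t))) +
      (∫ t in b..(1:ℝ), t ^ n * Real.exp (-μ / (1 - t))) =
      ∫ t in (0:ℝ)..1, t ^ n * Real.exp (-μ / (1 - t)) := by
    rw [intervalIntegral.integral_add_adjacent_intervals hI0a hIab,
      intervalIntegral.integral_add_adjacent_intervals (hI0a.trans hIab) hIb1]
  have hpos0a : 0 ≤ ∫ t in (0:ℝ)..a, t ^ n * Real.exp (-μ / (1 - t)) := by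
    apply intervalIntegral.integral_nonneg h0a
    intro t ht; exact hnn t ht.1
  have hposb1 : 0 ≤ ∫ t in b..(1:ℝ), t ^ n * Real.exp (-μ / (1 - t)) := by
    apply intervalIntegral.integral_nonneg hb1
    intro t ht; exact hnn t (by linarith [ht.1])
  have hmid : (b - a) * (a ^ n * Real.exp (-μ / (1 - b))) ≤
      ∫ t in a..b, t ^ n * Real.exp (-μ / (1 - t)) := by
    have : (b - a) * (a ^ n * Real.exp (-μ / (1 - b))) =
        ∫ _ in a..b, a ^ n * Real.exp (-μ / (1 - b)) := by
      rw [intervalIntegral.integral_const, smul_eq_mul]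
    rw [this]
    apply intervalIntegral.integral_mono_on hab'
      (by apply _root_.intervalIntegrable_const) hIab
    intro t ht
    obtain ⟨hta, htb⟩ := ht
    have h1b : 0 < 1 - b := by linarith
    have h1t : 0 < 1 - t := by linarith
    have hexp : Real.exp (-μ / (1 - b)) ≤ Real.exp (-μ / (1 - t)) := by
      apply Real.exp_le_exp.mpr
      rw [neg_div, neg_div, neg_le_neg_iff]
      apply div_le_div_of_nonneg_left hμ.le h1b
      linarith
    have hpow : a ^ n ≤ t ^ n := pow_le_pow_left₀ h0a hta n
    exact mul_le_mul hpow hexp (Real.exp_pos _).le (pow_nonneg (h0a.trans hta) n)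
  linarith

theorem u_c_subexponential (μ : ℝ) (hμ : 0 < μ) :
    Filter.Tendsto
      (fun k : ℕ =>
        Real.log (∫ t in (0:ℝ)..1, t ^ (k - 1) * Real.exp (-μ / (1 - t))) / (-(k : ℝ)))
      Filter.atTop (nhds 0) := by
  rw [Metric.tendsto_atTop]
  intro ε hε
  set a : ℝ := Real.exp (-(ε/2)) with ha_def
  have ha0 : 0 < a := Real.exp_pos _
  have ha1 : a < 1 := Real.exp_lt_one_iff.mpr (by linarith)
  set b : ℝ := (a + 1) / 2 with hb_def
  have hab : a < b := by rw [hb_def]; linarith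
  have hb1 : b < 1 := by rw [hb_def]; linarith
  set D : ℝ := (b - a) * Real.exp (-μ / (1 - b)) with hD_def
  have hD0 : 0 < D := by
    apply mul_pos (by linarith) (Real.exp_pos _)
  have hev1 : ∀ᶠ k : ℕ in Filter.atTop, (-Real.log D) / (k : ℝ) < ε / 2 :=
    (tendsto_const_div_atTop_nhds_zero_nat (-Real.log D)).eventually
      (gt_mem_nhds (half_pos hε))
  have hev2 : ∀ᶠ k : ℕ in Filter.atTop, 1 ≤ k := Filter.eventually_ge_atTop 1
  obtain ⟨N, hN⟩ := (hev1.and hev2).exists_forall_of_atTop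
  refine ⟨N, fun k hk => ?_⟩
  obtain ⟨hNk1, hNk2⟩ := hN k hk
  have hk0 : (0:ℝ) < (k:ℝ) := by exact_mod_cast hNk2
  set u : ℝ := ∫ t in (0:ℝ)..1, t ^ (k - 1) * Real.exp (-μ / (1 - t)) with hu_def
  have hlow : a ^ (k - 1) * D ≤ u := by
    have := uc_lower μ hμ (k - 1) a b ha0 hab hb1
    rw [hu_def]
    calc a ^ (k-1) * D = (b - a) * (a ^ (k-1) * Real.exp (-μ / (1 - b))) := by
          rw [hD_def]; ring
      _ ≤ _ := this
  have hup : u ≤ 1 := uc_le_one μ hμ (k - 1)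
  have hu0 : 0 < u := lt_of_lt_of_le (by positivity) hlow
  have hlog0 : Real.log u ≤ 0 := Real.log_nonpos hu0.le hup
  have hloglow : ((k - 1 : ℕ) : ℝ) * (-(ε/2)) + Real.log D ≤ Real.log u := by
    have h1 : Real.log (a ^ (k-1) * D) ≤ Real.log u :=
      Real.log_le_log (by positivity) hlow
    rwa [Real.log_mul (by positivity) hD0.ne', Real.log_pow, ha_def, Real.log_exp] at h1
  have hcast : ((k - 1 : ℕ) : ℝ) ≤ (k : ℝ) := by exact_mod_cast Nat.sub_le k 1
  have hnum : -Real.log u ≤ (k : ℝ) * (ε/2) + (-Real.log D) := by nlinarith [half_pos hε]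
  have hfk : Real.log u / (-(k:ℝ)) = (-Real.log u) / (k:ℝ) := by
    rw [div_neg, neg_div]
  have hnonneg : 0 ≤ Real.log u / (-(k:ℝ)) := by
    rw [hfk]
    apply div_nonneg (by linarith) hk0.le
  have hlt : Real.log u / (-(k:ℝ)) < ε := by
    rw [hfk]
    have h2 : (-Real.log u) / (k:ℝ) ≤ ((k : ℝ) * (ε/2) + (-Real.log D)) / (k:ℝ) := by
      gcongr
    have h3 : ((k : ℝ) * (ε/2) + (-Real.log D)) / (k:ℝ) = ε/2 + (-Real.log D)/(k:ℝ) := by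
      field_simp
    linarith
  rw [Real.dist_eq, sub_zero, abs_of_nonneg hnonneg]
  exact hlt
end

section
/- Let β > 0 and 0 ≤ ζ < 1. Then there exist positive constants c₁ ≤ c₂ such that for all integers k ≥ 1, c₁ k^{-(1+β)} ≤ ∫₀¹ t^{k-1} ((1-t)/(1-ζt))^{β} dt ≤ c₂ k^{-(1+β)}. -/
open Real MeasureTheory Set intervalIntegral

private lemma aux_pow_le_exp (k : ℕ) (hk : 1 ≤ k) {t : ℝ} (h0 : 0 ≤ t) (h1 : t ≤ 1) :
    t ^ (k - 1) ≤ Real.exp 1 * Real.exp ((k : ℝ) * (t - 1)) := by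
  have h2 : t ≤ Real.exp (t - 1) := by
    have := Real.add_one_le_exp (t - 1); linarith
  calc t ^ (k - 1) ≤ Real.exp (t - 1) ^ (k - 1) := pow_le_pow_left₀ h0 h2 _
    _ = Real.exp (((k - 1 : ℕ) : ℝ) * (t - 1)) := by rw [← Real.exp_nat_mul]
    _ = Real.exp (((k : ℝ) - 1) * (t - 1)) := by
        rw [Nat.cast_sub hk, Nat.cast_one]
    _ ≤ Real.exp 1 * Real.exp ((k : ℝ) * (t - 1)) := by
        rw [← Real.exp_add]
        apply Real.exp_le_exp.2
        nlinarith

private lemma aux_pow_ge_exp (k : ℕ) (hk : 1 ≤ k) :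
    Real.exp (-1) ≤ (1 - 1 / (k : ℝ)) ^ (k - 1) := by
  rcases eq_or_lt_of_le hk with h | h
  · simp [← h]
  · have hk2 : 2 ≤ k := h
    have hkR : (2 : ℝ) ≤ (k : ℝ) := by exact_mod_cast hk2
    have hx : (0 : ℝ) < 1 - 1 / (k : ℝ) := by
      rw [sub_pos]
      rw [div_lt_one (by linarith)]; linarith
    have hkm : ((k - 1 : ℕ) : ℝ) = (k : ℝ) - 1 := by
      rw [Nat.cast_sub hk, Nat.cast_one]
    have hk1 : (0 : ℝ) < (k : ℝ) - 1 := by linarith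
    have hpow : (1 - 1 / (k : ℝ)) ^ (k - 1) =
        Real.exp (((k : ℝ) - 1) * Real.log (1 - 1 / (k : ℝ))) := by
      conv_lhs => rw [← Real.exp_log hx]
      rw [← Real.exp_nat_mul, hkm]
    rw [hpow]
    apply Real.exp_le_exp.2
    have hinv : (1 - 1 / (k : ℝ))⁻¹ = 1 + 1 / ((k : ℝ) - 1) := by
      have h1 : 1 - 1/(k:ℝ) = ((k:ℝ)-1)/k := by field_simp
      rw [h1, inv_div]
      rw [div_eq_iff hk1.ne']
      field_simp
      ring
    have hlog : Real.log (1 + 1 / ((k : ℝ) - 1)) ≤ 1 / ((k : ℝ) - 1) := by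
      have := Real.log_le_sub_one_of_pos
        (show (0 : ℝ) < 1 + 1 / ((k : ℝ) - 1) by positivity)
      linarith [this]
    have : Real.log (1 - 1 / (k : ℝ)) = -Real.log (1 + 1 / ((k : ℝ) - 1)) := by
      rw [← hinv, Real.log_inv, neg_neg]
    rw [this]
    have := mul_le_mul_of_nonneg_left hlog (le_of_lt hk1)
    rw [mul_one_div, div_self (ne_of_gt hk1)] at this
    nlinarith

theorem u_one_order (β ζ : ℝ) (hβ : 0 < β) (hζ0 : 0 ≤ ζ) (hζ1 : ζ < 1) :
    ∃ c₁ c₂ : ℝ, 0 < c₁ ∧ c₁ ≤ c₂ ∧ ∀ k : ℕ, 1 ≤ k →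
      c₁ * (k : ℝ) ^ (-(1 + β)) ≤
        (∫ t in (0:ℝ)..1, t ^ (k - 1) * ((1 - t) / (1 - ζ * t)) ^ β) ∧
      (∫ t in (0:ℝ)..1, t ^ (k - 1) * ((1 - t) / (1 - ζ * t)) ^ β) ≤
        c₂ * (k : ℝ) ^ (-(1 + β)) := by
  have h1ζ : (0 : ℝ) < 1 - ζ := by linarith
  set c₁ : ℝ := Real.exp (-1) * (2 : ℝ) ^ (-(1 + β)) with hc₁def
  set C : ℝ := (1 - ζ) ^ (-β) * Real.exp 1 * Real.Gamma (β + 1) with hCdef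
  have hc₁pos : 0 < c₁ := by
    apply mul_pos (Real.exp_pos _) (Real.rpow_pos_of_pos (by norm_num) _)
  have hCpos : 0 < C := by
    apply mul_pos (mul_pos (Real.rpow_pos_of_pos h1ζ _) (Real.exp_pos _))
    exact Real.Gamma_pos_of_pos (by linarith)
  refine ⟨c₁, max c₁ C, hc₁pos, le_max_left _ _, fun k hk => ?_⟩
  have hkR : (1 : ℝ) ≤ (k : ℝ) := by exact_mod_cast hk
  have hkpos : (0 : ℝ) < (k : ℝ) := by linarith
  -- denominators
  have hden : ∀ t : ℝ, t ∈ Icc (0:ℝ) 1 → 0 < 1 - ζ * t := by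
    intro t ht
    have : ζ * t ≤ ζ := by
      nlinarith [ht.1, ht.2]
    linarith
  -- continuity / integrability of the main integrand
  set f : ℝ → ℝ := fun t => t ^ (k - 1) * ((1 - t) / (1 - ζ * t)) ^ β with hfdef
  have hfcont : ContinuousOn f (Icc (0:ℝ) 1) := by
    apply ContinuousOn.mul (continuousOn_pow _)
    apply ContinuousOn.rpow_const
    · exact ((continuousOn_const.sub continuousOn_id).div
        (continuousOn_const.sub (continuousOn_const.mul continuousOn_id))
        (fun t ht => (hden t ht).ne'))
    · intro t ht; exact Or.inr hβ.le
  have hfint : IntervalIntegrable f volume 0 1 := by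
    apply ContinuousOn.intervalIntegrable
    rwa [Set.uIcc_of_le (by norm_num : (0:ℝ) ≤ 1)]
  have hfnonneg : ∀ t ∈ Icc (0:ℝ) 1, 0 ≤ f t := by
    intro t ht
    apply mul_nonneg (pow_nonneg ht.1 _)
    apply Real.rpow_nonneg
    apply div_nonneg (by linarith [ht.2]) (hden t ht).le
  -- ============ LOWER BOUND ============
  set a : ℝ := 1 - 1/(k:ℝ) with hadef
  set b : ℝ := 1 - 1/(2*(k:ℝ)) with hbdef
  have h2k : (0:ℝ) < 2*(k:ℝ) := by positivity
  have hab : a ≤ b := by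
    apply sub_le_sub_left
    rw [div_le_div_iff₀ h2k hkpos]
    nlinarith
  have ha0 : 0 ≤ a := by
    rw [hadef, sub_nonneg, div_le_one hkpos]; exact hkR
  have hb1 : b ≤ 1 := by
    rw [hbdef]; have : 0 < 1/(2*(k:ℝ)) := by positivity
    linarith
  have hfint' : IntegrableOn f (Ioc 0 1) volume :=
    (intervalIntegrable_iff_integrableOn_Ioc_of_le (by norm_num)).1 hfint
  have hfint'' : IntegrableOn f (Ioc a b) volume :=
    hfint'.mono_set (Set.Ioc_subset_Ioc ha0 hb1)
  have hconst : ∀ t ∈ Ioc a b, Real.exp (-1) * (1/(2*(k:ℝ)))^β ≤ f t := by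
    intro t ht
    have htIcc : t ∈ Icc (0:ℝ) 1 := ⟨le_trans ha0 ht.1.le, le_trans ht.2 hb1⟩
    have hdenpos : 0 < 1 - ζ * t := hden t htIcc
    have h1t : (0:ℝ) ≤ 1 - t := by linarith [htIcc.2]
    have hstep1 : Real.exp (-1) ≤ t ^ (k-1) := by
      refine le_trans (aux_pow_ge_exp k hk) ?_
      exact pow_le_pow_left₀ ha0 ht.1.le _
    have hstep2 : (1/(2*(k:ℝ)))^β ≤ ((1 - t) / (1 - ζ * t)) ^ β := by
      apply Real.rpow_le_rpow (by positivity) ?_ hβ.le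
      have h1 : 1/(2*(k:ℝ)) ≤ 1 - t := by
        have := ht.2; rw [hbdef] at this; linarith
      refine le_trans h1 ?_
      rw [le_div_iff₀ hdenpos]
      nlinarith [mul_nonneg (mul_nonneg hζ0 htIcc.1) h1t]
    calc Real.exp (-1) * (1/(2*(k:ℝ)))^β
        ≤ t ^ (k-1) * ((1 - t) / (1 - ζ * t)) ^ β := by
          apply mul_le_mul hstep1 hstep2 (by positivity)
          exact pow_nonneg htIcc.1 _
      _ = f t := rfl
  have hvol : volume.real (Ioc a b) = 1/(2*(k:ℝ)) := by
    rw [Measure.real, Real.volume_Ioc, ENNReal.toReal_ofReal (by linarith)]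
    rw [hadef, hbdef]
    field_simp
    ring
  have hlow0 : Real.exp (-1) * (1/(2*(k:ℝ)))^β * (1/(2*(k:ℝ)))
      ≤ ∫ t in Ioc a b, f t := by
    have := MeasureTheory.setIntegral_ge_of_const_le (μ := volume)
      measurableSet_Ioc (by simp [Real.volume_Ioc]) hconst hfint''
    rw [hvol, smul_eq_mul, mul_comm] at this; exact this
  have hmono : (∫ t in Ioc a b, f t) ≤ ∫ t in Ioc 0 1, f t := by
    apply MeasureTheory.setIntegral_mono_set hfint'
    · exact (MeasureTheory.ae_restrict_iff' measurableSet_Ioc).2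
        (Filter.Eventually.of_forall fun t ht => hfnonneg t ⟨ht.1.le, ht.2⟩)
    · exact (Set.Ioc_subset_Ioc ha0 hb1).eventuallyLE
  have hint_eq : (∫ t in (0:ℝ)..1, f t) = ∫ t in Ioc 0 1, f t :=
    intervalIntegral.integral_of_le (by norm_num)
  have hclow : Real.exp (-1) * (1/(2*(k:ℝ)))^β * (1/(2*(k:ℝ)))
      = c₁ * (k:ℝ) ^ (-(1+β)) := by
    have e1 : (1/(2*(k:ℝ))) = (2*(k:ℝ)) ^ (-(1:ℝ)) := by
      rw [Real.rpow_neg_one, one_div]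
    have e2 : (1/(2*(k:ℝ)))^β = (2*(k:ℝ)) ^ (-β) := by
      rw [one_div, ← Real.rpow_neg_one, ← Real.rpow_mul h2k.le]
      norm_num
    rw [e2, e1, mul_assoc, ← Real.rpow_add h2k]
    have e3 : -β + -1 = -(1+β) := by ring
    rw [e3, Real.mul_rpow (by norm_num : (0:ℝ) ≤ 2) hkpos.le, hc₁def]
    ring
  have hlower : c₁ * (k:ℝ) ^ (-(1+β)) ≤ ∫ t in (0:ℝ)..1, f t := by
    rw [← hclow, hint_eq]
    exact le_trans hlow0 hmono
  -- ============ UPPER BOUND ============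
  set g : ℝ → ℝ := fun t => Real.exp ((k:ℝ)*(t-1)) * (1-t)^β with hgdef
  have hgcont : ContinuousOn g (Set.uIcc (0:ℝ) 1) := by
    apply ContinuousOn.mul
    · exact (Real.continuous_exp.comp (continuous_const.mul (continuous_id.sub continuous_const))).continuousOn
    · apply ContinuousOn.rpow_const (continuousOn_const.sub continuousOn_id)
      intro t ht; exact Or.inr hβ.le
  have hgint : IntervalIntegrable g volume 0 1 := hgcont.intervalIntegrable
  have hub : ∀ t ∈ Icc (0:ℝ) 1, f t ≤ ((1-ζ)^(-β) * Real.exp 1) * g t := by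
    intro t ht
    have hdenpos : 0 < 1 - ζ * t := hden t ht
    have h1t : (0:ℝ) ≤ 1 - t := by linarith [ht.2]
    have hstep1 : t ^ (k-1) ≤ Real.exp 1 * Real.exp ((k:ℝ)*(t-1)) :=
      aux_pow_le_exp k hk ht.1 ht.2
    have hstep2 : ((1 - t) / (1 - ζ * t)) ^ β ≤ (1-t)^β * (1-ζ)^(-β) := by
      have hdd : (1 - t) / (1 - ζ * t) ≤ (1-t)/(1-ζ) := by
        apply div_le_div_of_nonneg_left h1t h1ζ
        nlinarith [ht.1, ht.2]
      calc ((1 - t) / (1 - ζ * t)) ^ β ≤ ((1-t)/(1-ζ)) ^ β :=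
            Real.rpow_le_rpow (by positivity) hdd hβ.le
        _ = (1-t)^β * (1-ζ)^(-β) := by
            rw [Real.div_rpow h1t h1ζ.le, Real.rpow_neg h1ζ.le, div_eq_mul_inv]
    calc f t = t ^ (k-1) * ((1 - t) / (1 - ζ * t)) ^ β := rfl
      _ ≤ (Real.exp 1 * Real.exp ((k:ℝ)*(t-1))) * ((1-t)^β * (1-ζ)^(-β)) := by
          apply mul_le_mul hstep1 hstep2 (Real.rpow_nonneg (by positivity) _)
          positivity
      _ = ((1-ζ)^(-β) * Real.exp 1) * g t := by rw [hgdef]; ring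
  have hmono2 : (∫ t in (0:ℝ)..1, f t)
      ≤ ((1-ζ)^(-β) * Real.exp 1) * ∫ t in (0:ℝ)..1, g t := by
    rw [← intervalIntegral.integral_const_mul]
    exact intervalIntegral.integral_mono_on (by norm_num) hfint
      (hgint.const_mul _) hub
  -- compute / bound ∫ g
  set H : ℝ → ℝ := fun u => Real.exp (-u) * u^β with hHdef
  set G : ℝ → ℝ := fun s => Real.exp (-((k:ℝ)*s)) * s^β with hGdef
  have hstepA : (∫ t in (0:ℝ)..1, g t) = ∫ s in (0:ℝ)..1, G s := by
    have heq : (fun t => g t) = fun t => G (1 - t) := by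
      funext t
      rw [hgdef, hGdef]
      simp only []
      congr 1
      rw [Real.exp_eq_exp]
      ring
    rw [heq, intervalIntegral.integral_comp_sub_left G 1]
    norm_num
  have hstepB : (∫ s in (0:ℝ)..1, G s)
      = (k:ℝ)^(-β) * ∫ s in (0:ℝ)..1, H ((k:ℝ) * s) := by
    rw [← intervalIntegral.integral_const_mul]
    apply intervalIntegral.integral_congr
    intro s hs
    rw [Set.uIcc_of_le (by norm_num : (0:ℝ) ≤ 1)] at hs
    rw [hGdef, hHdef]
    simp only []
    rw [Real.mul_rpow hkpos.le hs.1]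
    have h1 : (k:ℝ)^(-β) * (k:ℝ)^β = 1 := by
      rw [← Real.rpow_add hkpos]; norm_num
    calc Real.exp (-((k:ℝ)*s)) * s^β
        = ((k:ℝ)^(-β) * (k:ℝ)^β) * (Real.exp (-((k:ℝ)*s)) * s^β) := by
          rw [h1, one_mul]
      _ = (k:ℝ)^(-β) * (Real.exp (-((k:ℝ)*s)) * ((k:ℝ)^β * s^β)) := by ring
  have hstepC : (∫ s in (0:ℝ)..1, H ((k:ℝ) * s))
      = ((k:ℝ))⁻¹ * ∫ u in (0:ℝ)..(k:ℝ), H u := by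
    have := intervalIntegral.integral_comp_mul_left (a := (0:ℝ)) (b := 1) H hkpos.ne'
    rw [this]
    norm_num
  have hHint : IntegrableOn H (Ioi 0) volume := by
    have := Real.GammaIntegral_convergent (show (0:ℝ) < β + 1 by linarith)
    simpa [hHdef] using this
  have hstepD : (∫ u in (0:ℝ)..(k:ℝ), H u) ≤ Real.Gamma (β+1) := by
    rw [intervalIntegral.integral_of_le hkpos.le]
    have hG : Real.Gamma (β+1) = ∫ u in Ioi (0:ℝ), H u := by
      rw [Real.Gamma_eq_integral (by linarith : (0:ℝ) < β + 1)]
      simp [hHdef]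
    rw [hG]
    apply MeasureTheory.setIntegral_mono_set hHint
    · exact (MeasureTheory.ae_restrict_iff' measurableSet_Ioi).2
        (Filter.Eventually.of_forall fun u hu => mul_nonneg (Real.exp_nonneg _)
          (Real.rpow_nonneg (le_of_lt (Set.mem_Ioi.1 hu)) _))
    · exact Set.Ioc_subset_Ioi_self.eventuallyLE
  have hkpow : (k:ℝ)^(-β) * ((k:ℝ))⁻¹ = (k:ℝ)^(-(1+β)) := by
    rw [← Real.rpow_neg_one (k:ℝ), ← Real.rpow_add hkpos]
    congr 1
    ring
  have h1 : (∫ t in (0:ℝ)..1, g t) ≤ (k:ℝ)^(-(1+β)) * Real.Gamma (β+1) := by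
    rw [hstepA, hstepB, hstepC]
    calc (k:ℝ)^(-β) * (((k:ℝ))⁻¹ * ∫ u in (0:ℝ)..(k:ℝ), H u)
        ≤ (k:ℝ)^(-β) * (((k:ℝ))⁻¹ * Real.Gamma (β+1)) := by
          apply mul_le_mul_of_nonneg_left
            (mul_le_mul_of_nonneg_left hstepD (by positivity))
            (Real.rpow_nonneg hkpos.le _)
      _ = (k:ℝ)^(-(1+β)) * Real.Gamma (β+1) := by rw [← hkpow]; ring
  have hupper : (∫ t in (0:ℝ)..1, f t) ≤ (max c₁ C) * (k:ℝ)^(-(1+β)) := by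
    calc (∫ t in (0:ℝ)..1, f t)
        ≤ ((1-ζ)^(-β) * Real.exp 1) * ∫ t in (0:ℝ)..1, g t := hmono2
      _ ≤ ((1-ζ)^(-β) * Real.exp 1) * ((k:ℝ)^(-(1+β)) * Real.Gamma (β+1)) := by
          apply mul_le_mul_of_nonneg_left h1
          exact mul_nonneg (Real.rpow_nonneg h1ζ.le _) (Real.exp_nonneg _)
      _ = C * (k:ℝ)^(-(1+β)) := by rw [hCdef]; ring
      _ ≤ (max c₁ C) * (k:ℝ)^(-(1+β)) :=
          mul_le_mul_of_nonneg_right (le_max_right _ _)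
            (Real.rpow_nonneg hkpos.le _)
  exact ⟨hlower, hupper⟩
end

section
/- Let β < -1 and 0 < γ < 1, and u₂(k) = ∫₀^{γ} t^{k-1} ((γ-t)/(1-t))^{-β} dt. Then there exist constants 0 < c₁ ≤ c₂ such that c₁ γ^k k^{-1+β} ≤ u₂(k) ≤ c₂ γ^k k^{-1+β} for all integers k ≥ 1. -/
open MeasureTheory Set

private lemma rpow_div_mono {x d₁ d₂ a : ℝ} (hx : 0 ≤ x) (h1 : 0 < d₁) (h12 : d₁ ≤ d₂) (ha : 0 ≤ a) :
    (x / d₂) ^ a ≤ (x / d₁) ^ a :=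
  Real.rpow_le_rpow (div_nonneg hx (h1.trans_le h12).le) (div_le_div_of_nonneg_left hx h1 h12) ha

private lemma exp_aux (k : ℕ) (hk : 1 ≤ k) : Real.exp (-1) ≤ (((k:ℝ) - 1) / k) ^ (k - 1) := by
  rcases Nat.eq_or_lt_of_le hk with h | h
  · subst h
    simp
  · have hkr : (1:ℝ) < (k:ℝ) := by exact_mod_cast h
    have hm : (0:ℝ) < (k:ℝ) - 1 := by linarith
    have h1 : Real.exp (-(1/((k:ℝ)-1))) ≤ ((k:ℝ)-1)/k := by
      rw [Real.exp_neg]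
      have h2 : (1/((k:ℝ)-1)) + 1 ≤ Real.exp (1/((k:ℝ)-1)) := Real.add_one_le_exp _
      have h3 : ((1/((k:ℝ)-1)) + 1)⁻¹ ≥ (Real.exp (1/((k:ℝ)-1)))⁻¹ :=
        inv_anti₀ (by positivity) h2
      have h4 : ((1/((k:ℝ)-1)) + 1)⁻¹ = ((k:ℝ)-1)/k := by
        rw [inv_eq_one_div]
        rw [div_eq_div_iff (by positivity) (by positivity)]
        field_simp
        ring
      linarith
    calc Real.exp (-1) = Real.exp (-(1/((k:ℝ)-1))) ^ (k-1) := by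
          rw [← Real.exp_nat_mul]
          congr 1
          have : ((k - 1 : ℕ) : ℝ) = (k:ℝ) - 1 := by
            push_cast [Nat.cast_sub hk]; ring
          rw [this]; field_simp
      _ ≤ _ := pow_le_pow_left₀ (Real.exp_nonneg _) h1 _

private lemma pt_exp (n : ℕ) {γ t : ℝ} (hγ : 0 < γ) (ht0 : 0 ≤ t) (htγ : t ≤ γ) :
    t ^ n ≤ γ ^ n * Real.exp ((n:ℝ) * ((t - γ)/γ)) := by
  have h1 : t ≤ γ * Real.exp ((t - γ)/γ) := by
    have h2 : (t - γ)/γ + 1 ≤ Real.exp ((t - γ)/γ) := Real.add_one_le_exp _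
    have h3 : (t - γ)/γ + 1 = t/γ := by field_simp; ring
    rw [h3] at h2
    calc t = γ * (t/γ) := by field_simp
    _ ≤ γ * Real.exp ((t-γ)/γ) := mul_le_mul_of_nonneg_left h2 hγ.le
  calc t ^ n ≤ (γ * Real.exp ((t - γ)/γ)) ^ n := pow_le_pow_left₀ ht0 h1 n
  _ = γ ^ n * Real.exp ((n:ℝ) * ((t - γ)/γ)) := by
      rw [mul_pow, Real.exp_nat_mul]

theorem u_two_order (β γ : ℝ) (hβ : β < -1) (hγ0 : 0 < γ) (hγ1 : γ < 1) :
    ∃ c₁ c₂ : ℝ, 0 < c₁ ∧ c₁ ≤ c₂ ∧ ∀ k : ℕ, 1 ≤ k →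
      c₁ * γ ^ (k : ℝ) * (k : ℝ) ^ (-1 + β) ≤
        (∫ t in (0:ℝ)..γ, t ^ (k - 1) * ((γ - t) / (1 - t)) ^ (-β)) ∧
      (∫ t in (0:ℝ)..γ, t ^ (k - 1) * ((γ - t) / (1 - t)) ^ (-β)) ≤
        c₂ * γ ^ (k : ℝ) * (k : ℝ) ^ (-1 + β) := by
  obtain ⟨a, rfl⟩ : ∃ a : ℝ, β = -a := ⟨-β, (neg_neg β).symm⟩
  simp only [neg_neg]
  have ha' : 1 < a := by linarith
  have ha0 : (0:ℝ) < a := by linarith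
  have ha1 : (0:ℝ) < a + 1 := by linarith
  have hγ1' : (0:ℝ) < 1 - γ := by linarith
  set K : ℝ := (1 - γ) ^ (-a) * γ ^ a with hKdef
  have hKpos : 0 < K := by positivity
  have hΓpos : 0 < Real.Gamma (a+1) := Real.Gamma_pos_of_pos ha1
  refine ⟨γ ^ a / (Real.exp 1 * (a + 1)),
    max (K * Real.Gamma (a+1) * 2 ^ (a+1)) (K / (a+1)), by positivity, ?_, ?_⟩
  · -- c₁ ≤ c₂
    have h2 : (1:ℝ) ≤ (1-γ) ^ (-a) := by
      have := Real.rpow_le_rpow_of_exponent_ge hγ1' (by linarith : 1 - γ ≤ 1)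
        (by linarith : -a ≤ (0:ℝ))
      simpa using this
    have hK1 : γ ^ a ≤ K := by
      calc γ ^ a = 1 * γ ^ a := (one_mul _).symm
        _ ≤ (1-γ)^(-a) * γ ^ a := mul_le_mul_of_nonneg_right h2 (Real.rpow_nonneg hγ0.le _)
    have he1 : (1:ℝ) ≤ Real.exp 1 := by linarith [Real.add_one_le_exp (1:ℝ)]
    refine le_trans ?_ (le_max_right _ _)
    calc γ ^ a / (Real.exp 1 * (a+1)) ≤ γ ^ a / (a+1) := by
          apply div_le_div_of_nonneg_left (Real.rpow_nonneg hγ0.le a) ha1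
          nlinarith
      _ ≤ K / (a+1) := by gcongr
  intro k hk
  have hk1 : (1:ℝ) ≤ (k:ℝ) := by exact_mod_cast hk
  have hkpos : (0:ℝ) < (k:ℝ) := by linarith
  rw [show (-1 + -a) = -(a+1) by ring, Real.rpow_natCast]
  have hden : ∀ t ∈ Icc (0:ℝ) γ, (0:ℝ) < 1 - t := fun t ht => by
    have := ht.2; linarith
  have hcont : ContinuousOn (fun t : ℝ => t ^ (k - 1) * ((γ - t) / (1 - t)) ^ a) (Icc 0 γ) := by
    apply ContinuousOn.mul (continuous_pow (k-1)).continuousOn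
    apply ContinuousOn.rpow_const
    · exact ContinuousOn.div (continuousOn_const.sub continuousOn_id)
        (continuousOn_const.sub continuousOn_id) (fun t ht => (hden t ht).ne')
    · exact fun t ht => Or.inr ha0.le
  have hf0 : ∀ t ∈ Icc (0:ℝ) γ, 0 ≤ t ^ (k - 1) * ((γ - t) / (1 - t)) ^ a := fun t ht => by
    have h1 := hden t ht
    exact mul_nonneg (pow_nonneg ht.1 _)
      (Real.rpow_nonneg (div_nonneg (by linarith [ht.2]) h1.le) _)
  have hinteg : ∀ u v : ℝ, 0 ≤ u → u ≤ v → v ≤ γ →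
      IntervalIntegrable (fun t : ℝ => t ^ (k - 1) * ((γ - t) / (1 - t)) ^ a) volume u v := by
    intro u v hu huv hv
    apply ContinuousOn.intervalIntegrable
    apply hcont.mono
    rw [Set.uIcc_of_le huv]
    exact Icc_subset_Icc hu hv
  have hKup : ∀ t ∈ Icc (0:ℝ) γ, ((γ - t)/(1 - t)) ^ a ≤ (1-γ) ^ (-a) * (γ - t) ^ a := by
    intro t ht
    have h1t : 0 < 1 - t := hden t ht
    have h1 : ((γ - t)/(1 - t)) ^ a ≤ ((γ - t)/(1 - γ)) ^ a :=
      rpow_div_mono (by linarith [ht.2]) hγ1' (by linarith [ht.2]) ha0.le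
    calc ((γ - t)/(1 - t)) ^ a ≤ ((γ - t)/(1 - γ)) ^ a := h1
      _ = (1-γ) ^ (-a) * (γ - t) ^ a := by
        rw [Real.div_rpow (by linarith [ht.2] : (0:ℝ) ≤ γ - t) hγ1'.le,
          Real.rpow_neg hγ1'.le]
        ring
  constructor
  · -- LOWER BOUND
    set c : ℝ := γ - γ / k with hcdef
    have hγk0 : 0 < γ / k := by positivity
    have hγk : γ / k ≤ γ := by
      rw [div_le_iff₀ hkpos]; nlinarith
    have hc0 : 0 ≤ c := by rw [hcdef]; linarith
    have hcγ : c ≤ γ := by rw [hcdef]; linarith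
    have hpt : ∀ t ∈ Icc c γ,
        (Real.exp (-1) * γ ^ (k-1)) * (γ - t) ^ a ≤ t ^ (k-1) * ((γ - t)/(1 - t)) ^ a := by
      intro t ht
      have ht0 : 0 ≤ t := le_trans hc0 ht.1
      have htγ : t ≤ γ := ht.2
      have h1t : 0 < 1 - t := by linarith
      have h1 : (γ - t) ^ a ≤ ((γ - t)/(1 - t)) ^ a := by
        have := rpow_div_mono (x := γ - t) (d₁ := 1 - t) (d₂ := 1)
          (by linarith) h1t (by linarith) ha0.le
        simpa using this
      have h2 : Real.exp (-1) * γ ^ (k-1) ≤ t ^ (k-1) := by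
        have hcpow : c ^ (k-1) ≤ t ^ (k-1) := pow_le_pow_left₀ hc0 ht.1 _
        have hceq : c = γ * (((k:ℝ) - 1)/k) := by
          rw [hcdef]; field_simp
        calc Real.exp (-1) * γ ^ (k-1)
            ≤ (((k:ℝ)-1)/k) ^ (k-1) * γ ^ (k-1) :=
              mul_le_mul_of_nonneg_right (exp_aux k hk) (pow_nonneg hγ0.le _)
          _ = c ^ (k-1) := by rw [hceq, mul_pow]; ring
          _ ≤ t ^ (k-1) := hcpow
      exact mul_le_mul h2 h1 (Real.rpow_nonneg (by linarith) _) (pow_nonneg ht0 _)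
    have hg_int : IntervalIntegrable
        (fun t : ℝ => (Real.exp (-1) * γ ^ (k-1)) * (γ - t) ^ a) volume c γ :=
      (continuous_const.mul ((continuous_const.sub continuous_id).rpow_const
        (fun x => Or.inr ha0.le))).intervalIntegrable _ _
    have hmono := intervalIntegral.integral_mono_on hcγ hg_int (hinteg c γ hc0 hcγ le_rfl) hpt
    have hval : (∫ t in c..γ, (Real.exp (-1) * γ ^ (k-1)) * (γ - t) ^ a)
        = (Real.exp (-1) * γ ^ (k-1)) * ((γ/k) ^ (a+1) / (a+1)) := by
      rw [intervalIntegral.integral_const_mul]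
      congr 1
      have h5 : (∫ t in c..γ, (γ - t) ^ a) = ∫ x in (γ - γ)..(γ - c), x ^ a :=
        intervalIntegral.integral_comp_sub_left (fun x => x ^ a) γ
      rw [h5, sub_self, show γ - c = γ / k by rw [hcdef]; ring,
        integral_rpow (Or.inl (by linarith : (-1:ℝ) < a)),
        Real.zero_rpow (by linarith : a + 1 ≠ 0)]
      ring
    have hsplit := intervalIntegral.integral_add_adjacent_intervals
      (hinteg 0 c le_rfl hc0 hcγ) (hinteg c γ hc0 hcγ le_rfl)
    have hnn : 0 ≤ ∫ t in (0:ℝ)..c, t ^ (k-1) * ((γ - t)/(1 - t)) ^ a :=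
      intervalIntegral.integral_nonneg hc0 (fun u hu => hf0 u ⟨hu.1, le_trans hu.2 hcγ⟩)
    have hEq : γ ^ a / (Real.exp 1 * (a + 1)) * γ ^ k * (k:ℝ) ^ (-(a+1))
        = (Real.exp (-1) * γ ^ (k-1)) * ((γ/k) ^ (a+1) / (a+1)) := by
      rw [Real.rpow_neg hkpos.le, Real.div_rpow hγ0.le hkpos.le, Real.exp_neg,
        Real.rpow_add_one hγ0.ne' a,
        show γ ^ k = γ ^ (k-1) * γ by rw [← pow_succ]; congr 1; omega]
      have h1 : ((k:ℝ) ^ (a+1)) ≠ 0 := (Real.rpow_pos_of_pos hkpos _).ne'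
      have h2 : Real.exp 1 ≠ 0 := Real.exp_ne_zero 1
      field_simp
    rw [← hsplit, hEq]
    linarith [hmono, hnn, hval]
  · -- UPPER BOUND
    rcases Nat.eq_or_lt_of_le hk with hk1' | hk2
    · -- k = 1
      subst hk1'
      have hptu : ∀ t ∈ Icc (0:ℝ) γ,
          t ^ (1-1) * ((γ - t)/(1 - t)) ^ a ≤ (1-γ) ^ (-a) * (γ - t) ^ a := by
        intro t ht
        simpa using hKup t ht
      have hgint : IntervalIntegrable
          (fun t : ℝ => (1-γ) ^ (-a) * (γ - t) ^ a) volume 0 γ :=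
        (continuous_const.mul ((continuous_const.sub continuous_id).rpow_const
          (fun x => Or.inr ha0.le))).intervalIntegrable _ _
      have hub := intervalIntegral.integral_mono_on hγ0.le
        (hinteg 0 γ le_rfl hγ0.le le_rfl) hgint hptu
      have hval : (∫ t in (0:ℝ)..γ, (1-γ) ^ (-a) * (γ - t) ^ a)
          = K / (a+1) * γ := by
        rw [intervalIntegral.integral_const_mul]
        have h5 : (∫ t in (0:ℝ)..γ, (γ - t) ^ a) = ∫ x in (γ - γ)..(γ - 0), x ^ a :=
          intervalIntegral.integral_comp_sub_left (fun x => x ^ a) γ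
        rw [h5, sub_self, sub_zero, integral_rpow (Or.inl (by linarith : (-1:ℝ) < a)),
          Real.zero_rpow (by linarith : a + 1 ≠ 0), hKdef,
          Real.rpow_add_one hγ0.ne' a]
        ring
      refine hub.trans ?_
      rw [hval]
      have h6 : ((1:ℕ):ℝ) = (1:ℝ) := Nat.cast_one
      rw [h6, Real.one_rpow, pow_one, mul_one]
      have := le_max_right (K * Real.Gamma (a+1) * 2 ^ (a+1)) (K / (a+1))
      nlinarith
    · -- k ≥ 2
      have hk2' : (2:ℝ) ≤ (k:ℝ) := by exact_mod_cast hk2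
      set m : ℝ := (k:ℝ) - 1 with hmdef
      have hm0 : 0 < m := by rw [hmdef]; linarith
      set lam : ℝ := m / γ with hlamdef
      have hlam0 : 0 < lam := by rw [hlamdef]; positivity
      have hptu : ∀ t ∈ Icc (0:ℝ) γ, t ^ (k-1) * ((γ - t)/(1 - t)) ^ a ≤
          ((1-γ)^(-a) * γ ^ (k-1)) * (Real.exp (-(lam * (γ - t))) * (γ - t) ^ a) := by
        intro t ht
        have h1 := hKup t ht
        have h2 : t ^ (k-1) ≤ γ ^ (k-1) * Real.exp (-(lam * (γ - t))) := by
          have h3 := pt_exp (k-1) hγ0 ht.1 ht.2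
          have h4 : (((k-1:ℕ)):ℝ) * ((t - γ)/γ) = -(lam * (γ - t)) := by
            have h5 : (((k-1:ℕ)):ℝ) = m := by
              rw [hmdef]; push_cast [Nat.cast_sub hk]; ring
            rw [h5, hlamdef]; field_simp; ring
          rw [h4] at h3; exact h3
        calc t ^ (k-1) * ((γ - t)/(1 - t)) ^ a
            ≤ (γ ^ (k-1) * Real.exp (-(lam * (γ - t)))) * ((1-γ)^(-a) * (γ - t) ^ a) := by
              apply mul_le_mul h2 h1
                (Real.rpow_nonneg (div_nonneg (by linarith [ht.2]) (hden t ht).le) _)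
                (by positivity)
          _ = _ := by ring
      have hgint : IntervalIntegrable
          (fun t : ℝ => ((1-γ)^(-a) * γ ^ (k-1)) *
            (Real.exp (-(lam * (γ - t))) * (γ - t) ^ a)) volume 0 γ := by
        apply Continuous.intervalIntegrable
        have c1 : Continuous fun t : ℝ => Real.exp (-(lam * (γ - t))) :=
          Real.continuous_exp.comp ((continuous_const.mul (continuous_const.sub continuous_id)).neg)
        have c2 : Continuous fun t : ℝ => (γ - t) ^ a :=
          (continuous_const.sub continuous_id).rpow_const (fun x => Or.inr ha0.le)
        exact continuous_const.mul (c1.mul c2)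
      have hub := intervalIntegral.integral_mono_on hγ0.le
        (hinteg 0 γ le_rfl hγ0.le le_rfl) hgint hptu
      have hval1 : (∫ t in (0:ℝ)..γ, Real.exp (-(lam * (γ - t))) * (γ - t) ^ a)
          = ∫ u in (0:ℝ)..γ, Real.exp (-(lam * u)) * u ^ a := by
        have h := intervalIntegral.integral_comp_sub_left
          (a := 0) (b := γ) (fun u => Real.exp (-(lam * u)) * u ^ a) γ
        simpa using h
      have hval2 : (∫ u in (0:ℝ)..γ, Real.exp (-(lam * u)) * u ^ a)
          = lam ^ (-a) * ∫ u in (0:ℝ)..γ, Real.exp (-(lam * u)) * (lam * u) ^ a := by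
        rw [← intervalIntegral.integral_const_mul]
        apply intervalIntegral.integral_congr
        intro u hu
        rw [Set.uIcc_of_le hγ0.le] at hu
        simp only
        rw [Real.mul_rpow hlam0.le hu.1, Real.rpow_neg hlam0.le]
        have : (lam ^ a) ≠ 0 := (Real.rpow_pos_of_pos hlam0 a).ne'
        field_simp
      have hlg : lam * γ = m := by rw [hlamdef]; field_simp
      have hval3 : (∫ u in (0:ℝ)..γ, Real.exp (-(lam * u)) * (lam * u) ^ a)
          = lam⁻¹ * ∫ y in (0:ℝ)..m, Real.exp (-y) * y ^ a := by
        have h := intervalIntegral.integral_comp_mul_left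
          (a := 0) (b := γ) (fun y => Real.exp (-y) * y ^ a) hlam0.ne'
        rw [h, mul_zero, hlg, smul_eq_mul]
      have hbound : (∫ y in (0:ℝ)..m, Real.exp (-y) * y ^ a) ≤ Real.Gamma (a+1) := by
        have hconv := Real.GammaIntegral_convergent ha1
        rw [Real.Gamma_eq_integral ha1, intervalIntegral.integral_of_le hm0.le]
        have h0 : ∀ y ∈ Set.Ioi (0:ℝ), 0 ≤ Real.exp (-y) * y ^ (a+1-1) := fun y hy =>
          mul_nonneg (Real.exp_nonneg _) (Real.rpow_nonneg (le_of_lt hy) _)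
        have h := setIntegral_mono_set (s := Ioc 0 m) (t := Ioi 0) hconv
          ((ae_restrict_iff' measurableSet_Ioi).2 (ae_of_all _ h0))
          (HasSubset.Subset.eventuallyLE Ioc_subset_Ioi_self)
        simpa [add_sub_cancel_right] using h
      have hlamp : lam ^ (-a) * lam⁻¹ = lam ^ (-(a+1)) := by
        rw [show -(a+1) = -a + -1 by ring, Real.rpow_add hlam0, Real.rpow_neg_one]
      have hlam2 : lam ^ (-(a+1)) = m ^ (-(a+1)) * γ ^ (a+1) := by
        rw [hlamdef, Real.div_rpow hm0.le hγ0.le, Real.rpow_neg hγ0.le, div_inv_eq_mul]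
      have hm2 : m ^ (-(a+1)) ≤ 2 ^ (a+1) * (k:ℝ) ^ (-(a+1)) := by
        have h1 : ((k:ℝ)/2) ≤ m := by rw [hmdef]; linarith
        have h2 := Real.rpow_le_rpow_of_nonpos (by positivity : (0:ℝ) < (k:ℝ)/2) h1
          (by linarith : -(a+1) ≤ 0)
        have h3 : ((k:ℝ)/2) ^ (-(a+1)) = 2 ^ (a+1) * (k:ℝ) ^ (-(a+1)) := by
          rw [Real.div_rpow hkpos.le (by norm_num : (0:ℝ) ≤ 2),
            Real.rpow_neg (by norm_num : (0:ℝ) ≤ 2), div_inv_eq_mul]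
          ring
        linarith [h2, h3.symm.le]
      have hfin : ((1-γ)^(-a) * γ ^ (k-1)) * (lam ^ (-a) * (lam⁻¹ * Real.Gamma (a+1)))
          ≤ (K * Real.Gamma (a+1) * 2 ^ (a+1)) * γ ^ k * (k:ℝ) ^ (-(a+1)) := by
        have e1 : ((1-γ)^(-a) * γ ^ (k-1)) * (lam ^ (-a) * (lam⁻¹ * Real.Gamma (a+1)))
            = ((1-γ)^(-a) * γ ^ (k-1) * γ ^ (a+1) * Real.Gamma (a+1)) * m ^ (-(a+1)) := by
          rw [show lam ^ (-a) * (lam⁻¹ * Real.Gamma (a+1))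
              = (lam ^ (-a) * lam⁻¹) * Real.Gamma (a+1) by ring, hlamp, hlam2]
          ring
        rw [e1]
        calc ((1-γ)^(-a) * γ ^ (k-1) * γ ^ (a+1) * Real.Gamma (a+1)) * m ^ (-(a+1))
            ≤ ((1-γ)^(-a) * γ ^ (k-1) * γ ^ (a+1) * Real.Gamma (a+1)) *
              (2 ^ (a+1) * (k:ℝ) ^ (-(a+1))) :=
              mul_le_mul_of_nonneg_left hm2 (by positivity)
          _ = (K * Real.Gamma (a+1) * 2 ^ (a+1)) * γ ^ k * (k:ℝ) ^ (-(a+1)) := by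
              rw [hKdef, Real.rpow_add_one hγ0.ne' a,
                show γ ^ k = γ ^ (k-1) * γ by rw [← pow_succ]; congr 1; omega]
              ring
      have hmax : (K * Real.Gamma (a+1) * 2 ^ (a+1)) * γ ^ k * (k:ℝ) ^ (-(a+1))
          ≤ max (K * Real.Gamma (a+1) * 2 ^ (a+1)) (K/(a+1)) * γ ^ k * (k:ℝ) ^ (-(a+1)) := by
        have h8 : (0:ℝ) ≤ (k:ℝ) ^ (-(a+1)) := Real.rpow_nonneg hkpos.le _
        have h9 : (0:ℝ) ≤ γ ^ k := pow_nonneg hγ0.le k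
        apply mul_le_mul_of_nonneg_right _ h8
        apply mul_le_mul_of_nonneg_right (le_max_left _ _) h9
      have hCnn : (0:ℝ) ≤ (1-γ)^(-a) * γ ^ (k-1) := by positivity
      have hchain : (∫ t in (0:ℝ)..γ, t ^ (k-1) * ((γ - t)/(1 - t)) ^ a)
          ≤ ((1-γ)^(-a) * γ ^ (k-1)) * (lam ^ (-a) * (lam⁻¹ * Real.Gamma (a+1))) := by
        refine hub.trans ?_
        rw [intervalIntegral.integral_const_mul, hval1, hval2, hval3]
        apply mul_le_mul_of_nonneg_left _ hCnn
        apply mul_le_mul_of_nonneg_left _ (Real.rpow_nonneg hlam0.le _)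
        exact mul_le_mul_of_nonneg_left hbound (inv_nonneg.2 hlam0.le)
      exact hchain.trans (hfin.trans hmax)
end
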